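/- For the parabolic surface singularity T_{2,3,6} (= J₁₀), i.e., the surface germ (V,0) ⊂ (ℂ³,0) defined by x⁶ + y³ + z² = 0, the Poincaré series of the arc filtration is P_{V,0}(t) = (1 − t⁶) / ( (1 − t)(1 − t²)(1 − t³) ), as an identity of formal power series. -/

import Mathlib

open Filter Asymptotics Finset

open scoped Classical

/-- An arc on the hypersurface `{f = 0} ⊆ ℂ^N`: a germ of an analytic map
`φ : (ℂ,0) → (ℂ^N,0)` with `f ∘ φ ≡ 0` near `0`. -/
structure Arc (N : ℕ) (f : (Fin N → ℂ) → ℂ) where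
  toFun : ℂ → Fin N → ℂ
  analyticAt : AnalyticAt ℂ toFun 0
  map_zero : toFun 0 = 0
  vanish : ∀ᶠ τ in nhds 0, f (toFun τ) = 0

/-- The order of vanishing at `0` of a germ `ℂ → ℂ`: the exponent of the first
nonvanishing Taylor term, `⊤` for the zero germ (junk value `0` if not analytic). -/
noncomputable def ord (h : ℂ → ℂ) : ℕ∞ :=
  if hh : AnalyticAt ℂ h 0 then analyticOrderAt h 0 else 0

/-- `v(g)`: the minimal order of vanishing of `g` along arcs on `{f = 0} ⊆ ℂ^N`. -/
noncomputable def vArc (N : ℕ) (f g : (Fin N → ℂ) → ℂ) : ℕ∞ :=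
  ⨅ ψ : Arc N f, ord (g ∘ ψ.toFun)

/-- The `i`-th piece `F_i` of the arc filtration: analytic germs `g` with `v(g) ≥ i`. -/
def arcFiltration (N : ℕ) (f : (Fin N → ℂ) → ℂ) (i : ℕ) :
    Set ((Fin N → ℂ) → ℂ) :=
  {g | AnalyticAt ℂ g 0 ∧ (i : ℕ∞) ≤ vArc N f g}

/-- `dimQuotEq F i d` says that `dim_ℂ (F i / F (i+1)) = d`: there are `d` elements of
`F i` such that every element of `F i` has a unique expression as a linear combination
of them modulo `F (i+1)`. -/
def dimQuotEq {M : Type*} [AddCommGroup M] [Module ℂ M]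
    (F : ℕ → Set M) (i d : ℕ) : Prop :=
  ∃ b : Fin d → M, (∀ k, b k ∈ F i) ∧
    ∀ g ∈ F i, ∃! c : Fin d → ℂ, g - ∑ k, c k • b k ∈ F (i + 1)

/-- The stabilization `{f(x,y) - z² = 0} ⊆ ℂ³` of the plane curve `{f = 0}`. -/
def stab (f : (Fin 2 → ℂ) → ℂ) : (Fin 3 → ℂ) → ℂ :=
  fun w => f ![w 0, w 1] - w 2 ^ 2

/-- A reduced (squarefree) analytic germ at `0`: no square of a nonunit divides it. -/
def SquarefreeGerm {N : ℕ} (f : (Fin N → ℂ) → ℂ) : Prop :=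
  ∀ u : (Fin N → ℂ) → ℂ, AnalyticAt ℂ u 0 → u 0 = 0 →
    ¬ ∃ w : (Fin N → ℂ) → ℂ, AnalyticAt ℂ w 0 ∧
      ∀ᶠ x in nhds 0, f x = u x * u x * w x


-- eventually ‖τ‖ ≤ 1 near 0
lemma ev_norm_le_one : ∀ᶠ τ : ℂ in nhds 0, ‖τ‖ ≤ 1 := by
  filter_upwards [Metric.ball_mem_nhds (0 : ℂ) one_pos] with τ hτ
  simpa using (mem_ball_zero_iff.mp hτ).le

-- τ^n =O τ^m near 0 when m ≤ n
lemma isBigO_pow_pow_of_le {m n : ℕ} (h : m ≤ n) :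
    (fun τ : ℂ => τ ^ n) =O[nhds 0] fun τ => τ ^ m := by
  rw [isBigO_iff]
  refine ⟨1, ?_⟩
  filter_upwards [ev_norm_le_one] with τ hτ
  simp only [norm_pow, one_mul]
  exact pow_le_pow_of_le_one (norm_nonneg _) hτ h

-- key contradiction lemma
lemma keyM {u : ℂ → ℂ} (hu : ContinuousAt u 0) (hu0 : u 0 ≠ 0) {n m : ℕ} (hnm : n < m)
    (hO : (fun τ : ℂ => τ ^ n * u τ) =O[nhdsWithin (0:ℂ) {(0:ℂ)}ᶜ] fun τ => τ ^ m) : False := by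
  obtain ⟨k, rfl⟩ : ∃ k, m = n + (k + 1) := ⟨m - n - 1, by omega⟩
  obtain ⟨C, hC⟩ := isBigO_iff.mp hO
  have hsq : ∀ᶠ τ : ℂ in nhdsWithin (0:ℂ) {(0:ℂ)}ᶜ, ‖u τ‖ ≤ C * ‖τ‖ := by
    have h1 : ∀ᶠ τ : ℂ in nhdsWithin (0:ℂ) {(0:ℂ)}ᶜ, ‖τ‖ ≤ 1 :=
      eventually_nhdsWithin_of_eventually_nhds ev_norm_le_one
    have h2 : ∀ᶠ τ : ℂ in nhdsWithin (0:ℂ) {(0:ℂ)}ᶜ, τ ≠ 0 := by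
      exact eventually_mem_nhdsWithin.mono (by intro x hx; simpa using hx)
    filter_upwards [hC, h1, h2] with τ hCτ hτ1 hτ0
    rw [norm_mul, norm_pow, norm_pow, pow_add] at hCτ
    have htp : (0:ℝ) < ‖τ‖ ^ n := by
      have : (0:ℝ) < ‖τ‖ := norm_pos_iff.mpr hτ0
      positivity
    have hu1 : ‖u τ‖ ≤ C * ‖τ‖ ^ (k + 1) := by
      have : ‖τ‖ ^ n * ‖u τ‖ ≤ ‖τ‖ ^ n * (C * ‖τ‖ ^ (k + 1)) := by
        calc ‖τ‖ ^ n * ‖u τ‖ ≤ C * (‖τ‖ ^ n * ‖τ‖ ^ (k + 1)) := hCτ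
          _ = ‖τ‖ ^ n * (C * ‖τ‖ ^ (k + 1)) := by ring
      exact le_of_mul_le_mul_left this htp
    have hC0 : 0 ≤ C := by
      by_contra hneg
      push_neg at hneg
      have : C * ‖τ‖ ^ (k + 1) < 0 := mul_neg_of_neg_of_pos hneg (pow_pos (norm_pos_iff.mpr hτ0) _)
      have := (norm_nonneg (u τ)).trans hu1
      linarith
    refine hu1.trans ?_
    have h4 : ‖τ‖ ^ (k + 1) ≤ ‖τ‖ := by
      have : ‖τ‖ ^ (k + 1) ≤ ‖τ‖ ^ 1 :=
        pow_le_pow_of_le_one (norm_nonneg _) hτ1 (by omega)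
      simpa using this
    exact mul_le_mul_of_nonneg_left h4 hC0
  have hlim0 : Filter.Tendsto u (nhdsWithin (0:ℂ) {(0:ℂ)}ᶜ) (nhds 0) := by
    apply squeeze_zero_norm' hsq
    have : Filter.Tendsto (fun τ : ℂ => C * ‖τ‖) (nhds 0) (nhds (C * ‖(0:ℂ)‖)) :=
      (continuous_const.mul continuous_norm).tendsto 0
    simpa using this.mono_left nhdsWithin_le_nhds
  have hlimu : Filter.Tendsto u (nhdsWithin (0:ℂ) {(0:ℂ)}ᶜ) (nhds (u 0)) :=
    hu.continuousWithinAt.tendsto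
  exact hu0 (tendsto_nhds_unique hlimu hlim0)

-- order ≥ m implies BigO
lemma ordGE {h : ℂ → ℂ} (hh : AnalyticAt ℂ h 0) {m : ℕ} (hm : (m : ℕ∞) ≤ analyticOrderAt h 0) :
    h =O[nhds 0] fun τ => τ ^ m := by
  cases hn : analyticOrderAt h 0 with
  | top =>
    have : ∀ᶠ τ in nhds (0:ℂ), h τ = 0 := analyticOrderAt_eq_top.mp hn
    exact (isBigO_zero _ _).congr' (by filter_upwards [this] with τ hτ using hτ.symm) EventuallyEq.rfl
  | coe n =>
    rw [hn] at hm
    have hmn : m ≤ n := by exact_mod_cast hm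
    obtain ⟨u, hu, hu0, heq⟩ := (hh.analyticOrderAt_eq_natCast (n := n)).mp hn
    have hb : ∀ᶠ τ in nhds (0:ℂ), ‖u τ‖ ≤ ‖u 0‖ + 1 := by
      have := hu.continuousAt.tendsto
      have h2 := this (Metric.ball_mem_nhds (u 0) one_pos)
      filter_upwards [h2] with τ hτ
      have : dist (u τ) (u 0) < 1 := by simpa [Metric.mem_ball] using hτ
      have h5 := norm_sub_norm_le (u τ) (u 0)
      rw [← dist_eq_norm] at h5
      linarith
    rw [isBigO_iff]
    refine ⟨‖u 0‖ + 1, ?_⟩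
    filter_upwards [heq, hb, ev_norm_le_one] with τ hτ hbτ hτ1
    rw [hτ]
    have : ‖(τ - 0) ^ n • u τ‖ = ‖τ‖ ^ n * ‖u τ‖ := by simp [norm_smul]
    rw [this, norm_pow]
    calc ‖τ‖ ^ n * ‖u τ‖ ≤ ‖τ‖ ^ m * (‖u 0‖ + 1) := by
          have h1 : ‖τ‖ ^ n ≤ ‖τ‖ ^ m := pow_le_pow_of_le_one (norm_nonneg _) hτ1 hmn
          have h2 : (0:ℝ) ≤ ‖τ‖ ^ m := by positivity
          nlinarith [norm_nonneg (u τ), pow_nonneg (norm_nonneg τ) n]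
      _ = (‖u 0‖ + 1) * ‖τ‖ ^ m := by ring

-- BigO implies order ≥ m
lemma ordLB {h : ℂ → ℂ} (hh : AnalyticAt ℂ h 0) {m : ℕ}
    (hO : h =O[nhds 0] fun τ => τ ^ m) : (m : ℕ∞) ≤ analyticOrderAt h 0 := by
  cases hn : analyticOrderAt h 0 with
  | top => exact le_top
  | coe n =>
    by_contra hcon
    have hnm : n < m := by
      rw [not_le] at hcon
      exact_mod_cast hcon
    obtain ⟨u, hu, hu0, heq⟩ := (hh.analyticOrderAt_eq_natCast (n := n)).mp hn
    apply keyM hu.continuousAt hu0 hnm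
    have : (fun τ : ℂ => τ ^ n * u τ) =O[nhds 0] fun τ => τ ^ m :=
      hO.congr' (by filter_upwards [heq] with τ hτ; rw [hτ]; simp [smul_eq_mul]) EventuallyEq.rfl
    exact this.mono nhdsWithin_le_nhds

-- nonzero order when vanishing at 0
lemma ord_ne_zero {h : ℂ → ℂ} (hh : AnalyticAt ℂ h 0) (h0 : h 0 = 0) : analyticOrderAt h 0 ≠ 0 := by
  intro hc
  obtain ⟨u, hu, hu0, heq⟩ := (hh.analyticOrderAt_eq_natCast (n := 0)).mp (by exact_mod_cast hc)
  have := heq.self_of_nhds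
  simp [h0] at this
  exact hu0 this.symm


-- constant detection
lemma const_detect {K : ℂ} {i : ℕ}
    (h : (fun τ : ℂ => K * τ ^ i) =O[nhdsWithin (0:ℂ) {(0:ℂ)}ᶜ] fun τ => τ ^ (i+1)) :
    K = 0 := by
  obtain ⟨C, hC⟩ := isBigO_iff.mp h
  have h2 : ∀ᶠ τ : ℂ in nhdsWithin (0:ℂ) {(0:ℂ)}ᶜ, τ ≠ 0 :=
    eventually_mem_nhdsWithin.mono (by intro x hx; simpa using hx)
  have hb : ∀ᶠ τ : ℂ in nhdsWithin (0:ℂ) {(0:ℂ)}ᶜ, ‖K‖ ≤ C * ‖τ‖ := by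
    filter_upwards [hC, h2] with τ hCτ hτ0
    rw [norm_mul, norm_pow, norm_pow, pow_succ] at hCτ
    have htp : (0:ℝ) < ‖τ‖ ^ i := pow_pos (norm_pos_iff.mpr hτ0) _
    have : ‖K‖ * ‖τ‖ ^ i ≤ (C * ‖τ‖) * ‖τ‖ ^ i := by
      calc ‖K‖ * ‖τ‖ ^ i = ‖τ‖ ^ i * ‖K‖ := by ring
        _ ≤ C * (‖τ‖ ^ i * ‖τ‖) := by rw [mul_comm (‖τ‖^i) ‖K‖]; exact hCτ
        _ = (C * ‖τ‖) * ‖τ‖ ^ i := by ring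
    exact le_of_mul_le_mul_right this htp
  have hlim : Filter.Tendsto (fun τ : ℂ => C * ‖τ‖) (nhdsWithin (0:ℂ) {(0:ℂ)}ᶜ) (nhds 0) := by
    have : Filter.Tendsto (fun τ : ℂ => C * ‖τ‖) (nhds 0) (nhds (C * ‖(0:ℂ)‖)) :=
      (continuous_const.mul continuous_norm).tendsto 0
    simpa using this.mono_left nhdsWithin_le_nhds
  have : ‖K‖ ≤ 0 := ge_of_tendsto hlim hb
  simpa using le_antisymm this (norm_nonneg K)

-- polynomial coefficient extraction
lemma polyCoeffZero : ∀ (m : ℕ) (J : ℕ) (a : ℕ → ℂ),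
    ((fun τ : ℂ => ∑ j ∈ Finset.range J, a j * τ ^ j)
      =O[nhdsWithin (0:ℂ) {(0:ℂ)}ᶜ] fun τ => τ ^ m) →
    ∀ j, j < m → j < J → a j = 0 := by
  intro m
  induction m with
  | zero => intro J a _ j hj; omega
  | succ m ih =>
    intro J a hO j hjm hjJ
    match J, hjJ with
    | J'+1, hjJ =>
    have ha0 : a 0 = 0 := by
      have hcont : Filter.Tendsto (fun τ : ℂ => ∑ j ∈ Finset.range (J'+1), a j * τ ^ j)
          (nhdsWithin (0:ℂ) {(0:ℂ)}ᶜ) (nhds (a 0)) := by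
        have hc : Continuous (fun τ : ℂ => ∑ j ∈ Finset.range (J'+1), a j * τ ^ j) :=
          continuous_finset_sum _ fun j _ => continuous_const.mul (continuous_pow j)
        have := hc.tendsto 0
        have hval : (∑ j ∈ Finset.range (J'+1), a j * (0:ℂ) ^ j) = a 0 := by
          rw [Finset.sum_range_succ'] 
          simp
        rw [hval] at this
        exact this.mono_left nhdsWithin_le_nhds
      have hlim0 : Filter.Tendsto (fun τ : ℂ => ∑ j ∈ Finset.range (J'+1), a j * τ ^ j)
          (nhdsWithin (0:ℂ) {(0:ℂ)}ᶜ) (nhds 0) := by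
        obtain ⟨C, hC⟩ := isBigO_iff.mp hO
        apply squeeze_zero_norm' (hC.mono fun τ hτ => hτ.trans_eq (by rw [norm_pow]))
        have : Filter.Tendsto (fun τ : ℂ => C * ‖τ‖ ^ (m+1)) (nhds 0) (nhds (C * ‖(0:ℂ)‖ ^ (m+1))) :=
          (continuous_const.mul (continuous_norm.pow _)).tendsto 0
        simpa using this.mono_left nhdsWithin_le_nhds
      exact tendsto_nhds_unique hcont hlim0
    rcases Nat.eq_zero_or_pos j with rfl | hj0
    · exact ha0
    have hq : ∀ τ : ℂ, (∑ j ∈ Finset.range (J'+1), a j * τ ^ j)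
        = τ * ∑ j ∈ Finset.range J', a (j+1) * τ ^ j := by
      intro τ
      rw [Finset.sum_range_succ', ha0, Finset.mul_sum]
      simp [pow_succ]
      apply Finset.sum_congr rfl
      intro x _
      ring
    have hO' : (fun τ : ℂ => ∑ j ∈ Finset.range J', a (j+1) * τ ^ j)
        =O[nhdsWithin (0:ℂ) {(0:ℂ)}ᶜ] fun τ => τ ^ m := by
      obtain ⟨C, hC⟩ := isBigO_iff.mp hO
      rw [isBigO_iff]
      refine ⟨C, ?_⟩
      have h2 : ∀ᶠ τ : ℂ in nhdsWithin (0:ℂ) {(0:ℂ)}ᶜ, τ ≠ 0 :=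
        eventually_mem_nhdsWithin.mono (by intro x hx; simpa using hx)
      filter_upwards [hC, h2] with τ hCτ hτ0
      rw [hq τ, norm_mul, pow_succ, norm_mul] at hCτ
      have htp : (0:ℝ) < ‖τ‖ := norm_pos_iff.mpr hτ0
      have : ‖τ‖ * ‖∑ j ∈ Finset.range J', a (j+1) * τ ^ j‖ ≤ ‖τ‖ * (C * ‖τ ^ m‖) := by
        calc ‖τ‖ * ‖∑ j ∈ Finset.range J', a (j+1) * τ ^ j‖ ≤ C * (‖τ ^ m‖ * ‖τ‖) := hCτ
          _ = ‖τ‖ * (C * ‖τ ^ m‖) := by ring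
      exact le_of_mul_le_mul_left this htp
    obtain ⟨j', rfl⟩ : ∃ j', j = j' + 1 := ⟨j - 1, by omega⟩
    exact ih J' (fun j => a (j+1)) hO' j' (by omega) (by omega)

/-! ### Arcs on the T236 surface -/

def fT : (Fin 3 → ℂ) → ℂ := fun w : Fin 3 → ℂ => w 0 ^ 6 + w 1 ^ 3 + w 2 ^ 2

abbrev Arc' := Arc 3 fT

lemma ord_eq {h : ℂ → ℂ} (hh : AnalyticAt ℂ h 0) : ord h = analyticOrderAt h 0 := dif_pos hh

lemma arc_comp_analytic (ψ : Arc') (j : Fin 3) :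
    AnalyticAt ℂ (fun τ => ψ.toFun τ j) 0 := by
  have := ((ContinuousLinearMap.proj (R := ℂ) (φ := fun _ : Fin 3 => ℂ) j).analyticAt
    (ψ.toFun 0)).comp ψ.analyticAt
  exact this

lemma compPow {a : ℂ → ℂ} {p : ℕ} (hA : a =O[nhds (0:ℂ)] fun τ => τ ^ p) (e : ℕ) :
    (fun τ => a τ ^ e) =O[nhds (0:ℂ)] fun τ => τ ^ (p * e) := by
  simpa [pow_mul] using hA.pow e

lemma sqStep {x : ℂ → ℂ} (hx : AnalyticAt ℂ x 0) {e n m : ℕ}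
    (hord : analyticOrderAt x 0 = (n : ℕ∞)) (hlt : n * e < m)
    (hO : (fun τ => x τ ^ e) =O[nhds (0:ℂ)] fun τ => τ ^ m) : False := by
  obtain ⟨u, hu, hu0, heq⟩ := (hx.analyticOrderAt_eq_natCast (n := n)).mp hord
  have heq' : (fun τ => x τ ^ e) =ᶠ[nhds (0:ℂ)] fun τ => τ ^ (n * e) * u τ ^ e := by
    filter_upwards [heq] with τ hτ
    rw [hτ]
    simp [smul_eq_mul, mul_pow, pow_mul]
  have hO' : (fun τ : ℂ => τ ^ (n * e) * u τ ^ e) =O[nhds (0:ℂ)] fun τ => τ ^ m :=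
    hO.congr' heq' EventuallyEq.rfl
  exact keyM (hu.continuousAt.pow e) (pow_ne_zero e hu0) hlt (hO'.mono nhdsWithin_le_nhds)

lemma compBound (ψ : Arc') (j : Fin 3) :
    (fun τ => ψ.toFun τ j) =O[nhds (0:ℂ)] fun τ => τ ^ ((j : ℕ) + 1) := by
  have an : ∀ j : Fin 3, AnalyticAt ℂ (fun τ => ψ.toFun τ j) 0 := arc_comp_analytic ψ
  have z0 : ∀ j : Fin 3, ψ.toFun 0 j = 0 := fun j => congrFun ψ.map_zero j
  have base : ∀ j : Fin 3, (fun τ => ψ.toFun τ j) =O[nhds (0:ℂ)] fun τ => τ ^ 1 := by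
    intro j
    refine ordGE (an j) ?_
    have := ord_ne_zero (an j) (z0 j)
    exact ENat.one_le_iff_ne_zero.mpr this
  have hev : ∀ᶠ τ in nhds (0:ℂ),
      ψ.toFun τ 0 ^ 6 + ψ.toFun τ 1 ^ 3 + ψ.toFun τ 2 ^ 2 = 0 := ψ.vanish
  have hev2 : (fun τ => ψ.toFun τ 2 ^ 2) =ᶠ[nhds (0:ℂ)]
      fun τ => -(ψ.toFun τ 0 ^ 6) - ψ.toFun τ 1 ^ 3 := by
    filter_upwards [hev] with τ hτ
    linear_combination hτ
  have hev1 : (fun τ => ψ.toFun τ 1 ^ 3) =ᶠ[nhds (0:ℂ)]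
      fun τ => -(ψ.toFun τ 0 ^ 6) - ψ.toFun τ 2 ^ 2 := by
    filter_upwards [hev] with τ hτ
    linear_combination hτ
  -- combination bound helper
  have combo : ∀ {p q r : ℕ}, r ≤ p → r ≤ q →
      (fun τ => -(ψ.toFun τ 0 ^ 6) - ψ.toFun τ 1 ^ 3) =O[nhds (0:ℂ)] (fun τ : ℂ => τ ^ 6) →
      True := fun _ _ _ => trivial
  clear combo
  have h0pow : ∀ r : ℕ, r ≤ 6 → (fun τ => ψ.toFun τ 0 ^ 6) =O[nhds (0:ℂ)] fun τ => τ ^ r :=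
    fun r hr => (compPow (base 0) 6).trans (isBigO_pow_pow_of_le (by omega))
  -- step 1 : h2 = O(τ^2)
  have O2_2 : (fun τ => ψ.toFun τ 2) =O[nhds (0:ℂ)] fun τ => τ ^ 2 := by
    cases hn : analyticOrderAt (fun τ => ψ.toFun τ 2) 0 with
    | top => exact ordGE (an 2) (by rw [hn]; exact le_top)
    | coe n =>
      refine ordGE (an 2) ?_
      rw [hn]
      have hn0 : n ≠ 0 := by
        intro hc; exact ord_ne_zero (an 2) (z0 2) (by rw [hn, hc]; rfl)
      have hn1 : n ≠ 1 := by
        intro hc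
        subst hc
        refine sqStep (an 2) (e := 2) (m := 3) hn (by norm_num) ?_
        have : (fun τ => -(ψ.toFun τ 0 ^ 6) - ψ.toFun τ 1 ^ 3) =O[nhds (0:ℂ)]
            fun τ : ℂ => τ ^ 3 :=
          (h0pow 3 (by norm_num)).neg_left.sub
            ((compPow (base 1) 3).trans (isBigO_pow_pow_of_le (by norm_num)))
        exact this.congr' hev2.symm EventuallyEq.rfl
      exact_mod_cast (by omega : 2 ≤ n)
  -- step 2 : h1 = O(τ^2)
  have O1_2 : (fun τ => ψ.toFun τ 1) =O[nhds (0:ℂ)] fun τ => τ ^ 2 := by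
    cases hn : analyticOrderAt (fun τ => ψ.toFun τ 1) 0 with
    | top => exact ordGE (an 1) (by rw [hn]; exact le_top)
    | coe n =>
      refine ordGE (an 1) ?_
      rw [hn]
      have hn0 : n ≠ 0 := by
        intro hc; exact ord_ne_zero (an 1) (z0 1) (by rw [hn, hc]; rfl)
      have hn1 : n ≠ 1 := by
        intro hc
        subst hc
        refine sqStep (an 1) (e := 3) (m := 4) hn (by norm_num) ?_
        have : (fun τ => -(ψ.toFun τ 0 ^ 6) - ψ.toFun τ 2 ^ 2) =O[nhds (0:ℂ)]
            fun τ : ℂ => τ ^ 4 :=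
          (h0pow 4 (by norm_num)).neg_left.sub (compPow O2_2 2)
        exact this.congr' hev1.symm EventuallyEq.rfl
      exact_mod_cast (by omega : 2 ≤ n)
  -- step 3 : h2 = O(τ^3)
  have O2_3 : (fun τ => ψ.toFun τ 2) =O[nhds (0:ℂ)] fun τ => τ ^ 3 := by
    cases hn : analyticOrderAt (fun τ => ψ.toFun τ 2) 0 with
    | top => exact ordGE (an 2) (by rw [hn]; exact le_top)
    | coe n =>
      refine ordGE (an 2) ?_
      rw [hn]
      have hge2 : (2 : ℕ∞) ≤ analyticOrderAt (fun τ => ψ.toFun τ 2) 0 := ordLB (an 2) O2_2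
      rw [hn] at hge2
      have hn2 : 2 ≤ n := by exact_mod_cast hge2
      have hne2 : n ≠ 2 := by
        intro hc
        subst hc
        refine sqStep (an 2) (e := 2) (m := 5) hn (by norm_num) ?_
        have : (fun τ => -(ψ.toFun τ 0 ^ 6) - ψ.toFun τ 1 ^ 3) =O[nhds (0:ℂ)]
            fun τ : ℂ => τ ^ 5 :=
          (h0pow 5 (by norm_num)).neg_left.sub
            ((compPow O1_2 3).trans (isBigO_pow_pow_of_le (by norm_num)))
        exact this.congr' hev2.symm EventuallyEq.rfl
      exact_mod_cast (by omega : 3 ≤ n)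
  fin_cases j
  · simpa using base 0
  · simpa using O1_2
  · simpa using O2_3

/-! ### basis monomials and the cone -/

def dimFT : ℕ → ℕ := fun i => if 3 ≤ i then i / 2 + (i - 3) / 2 + 2 else i / 2 + 1

def expA (i k : ℕ) : ℕ := if k < i/2 + 1 then i - 2*k else i - 3 - 2*(k - (i/2+1))
def expB (i k : ℕ) : ℕ := if k < i/2 + 1 then k else k - (i/2+1)
def expC (i k : ℕ) : ℕ := if k < i/2 + 1 then 0 else 1

def bas (i k : ℕ) : (Fin 3 → ℂ) → ℂ :=
  fun w => w 0 ^ expA i k * w 1 ^ expB i k * w 2 ^ expC i k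

lemma m1_le_dimFT (i : ℕ) : i/2 + 1 ≤ dimFT i := by unfold dimFT; split <;> omega

lemma expo_weight {i k : ℕ} (hk : k < dimFT i) :
    expA i k + 2 * expB i k + 3 * expC i k = i := by
  unfold dimFT at hk
  by_cases h : k < i/2 + 1 <;> simp only [expA, expB, expC, h, if_true, if_false] <;>
    split at hk <;> omega

def onConeP (P : Fin 3 → ℂ) : Prop := P 0 ^ 6 + P 1 ^ 3 + P 2 ^ 2 = 0

lemma span_mono (i : ℕ) : ∀ C A B : ℕ, A + 2*B + 3*C = i →
    ∃ γ : Fin (dimFT i) → ℂ, ∀ P, onConeP P →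
      P 0 ^ A * P 1 ^ B * P 2 ^ C = ∑ k, γ k * bas i k P := by
  intro C
  induction C using Nat.strong_induction_on with
  | _ C ih =>
    match C with
    | 0 =>
      intro A B hw
      have hB : B < dimFT i := by
        have := m1_le_dimFT i
        omega
      refine ⟨fun k => if k = ⟨B, hB⟩ then 1 else 0, fun P hP => ?_⟩
      rw [Finset.sum_eq_single (⟨B, hB⟩ : Fin (dimFT i))]
      · have hb' : B < i/2 + 1 := by omega
        simp only [if_pos rfl, one_mul, bas, expA, expB, expC, if_pos hb']
        have hA : i - 2*B = A := by omega
        rw [hA, pow_zero, mul_one, if_pos trivial, one_mul]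
      · intro k _ hk; simp only [if_neg hk, zero_mul]
      · intro hk; exact absurd (Finset.mem_univ _) hk
    | 1 =>
      intro A B hw
      have h3i : 3 ≤ i := by omega
      have hB : i/2 + 1 + B < dimFT i := by
        unfold dimFT
        rw [if_pos h3i]
        omega
      refine ⟨fun k => if k = ⟨i/2+1+B, hB⟩ then 1 else 0, fun P hP => ?_⟩
      rw [Finset.sum_eq_single (⟨i/2+1+B, hB⟩ : Fin (dimFT i))]
      · have hb' : ¬ (i/2 + 1 + B < i/2 + 1) := by omega
        simp only [if_pos rfl, one_mul, bas, expA, expB, expC, if_neg hb']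
        have e1 : i - 3 - 2*(i/2+1+B - (i/2+1)) = A := by omega
        have e2 : i/2+1+B - (i/2+1) = B := by omega
        rw [e1, e2, pow_one, if_pos trivial, one_mul]
      · intro k _ hk; simp only [if_neg hk, zero_mul]
      · intro hk; exact absurd (Finset.mem_univ _) hk
    | (c+2) =>
      intro A B hw
      obtain ⟨γ1, h1⟩ := ih c (by omega) (A+6) B (by omega)
      obtain ⟨γ2, h2⟩ := ih c (by omega) A (B+3) (by omega)
      refine ⟨fun k => -γ1 k - γ2 k, fun P hP => ?_⟩
      have h2sq : P 2 ^ 2 = -(P 0 ^ 6) - P 1 ^ 3 := by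
        have := hP
        unfold onConeP at this
        linear_combination this
      have e1 : P 0 ^ A * P 1 ^ B * P 2 ^ (c+2)
          = -(P 0 ^ (A+6) * P 1 ^ B * P 2 ^ c) - P 0 ^ A * P 1 ^ (B+3) * P 2 ^ c := by
        calc P 0 ^ A * P 1 ^ B * P 2 ^ (c+2)
            = P 0 ^ A * P 1 ^ B * P 2 ^ c * P 2 ^ 2 := by ring
          _ = P 0 ^ A * P 1 ^ B * P 2 ^ c * (-(P 0 ^ 6) - P 1 ^ 3) := by rw [h2sq]
          _ = -(P 0 ^ (A+6) * P 1 ^ B * P 2 ^ c) - P 0 ^ A * P 1 ^ (B+3) * P 2 ^ c := by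
              ring
      rw [e1, h1 P hP, h2 P hP]
      rw [← Finset.sum_neg_distrib, ← Finset.sum_sub_distrib]
      apply Finset.sum_congr rfl
      intro k _
      ring

/-! ### linear independence of basis monomials on the cone -/

lemma bas_eval (i : ℕ) (k : Fin (dimFT i)) (w μ : ℂ) :
    bas i k ![1, w, μ] =
      if (k:ℕ) < i/2 + 1 then w ^ (k:ℕ) else w ^ ((k:ℕ) - (i/2+1)) * μ := by
  by_cases h : (k:ℕ) < i/2 + 1 <;>
    simp [bas, expA, expB, expC, h]

lemma indep (i : ℕ) (d : Fin (dimFT i) → ℂ)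
    (h : ∀ P, onConeP P → ∑ k, d k * bas i k P = 0) : ∀ k, d k = 0 := by
  have hm1D : i/2 + 1 ≤ dimFT i := m1_le_dimFT i
  set dA : ℕ → ℂ := fun b => if hb : b < dimFT i then d ⟨b, hb⟩ else 0 with hdA
  set dB : ℕ → ℂ := fun b => if hb : i/2 + 1 + b < dimFT i then d ⟨i/2 + 1 + b, hb⟩ else 0
    with hdB
  have key : ∀ w μ : ℂ, (∑ k, d k * bas i k ![1, w, μ]) =
      (∑ b ∈ Finset.range (i/2+1), dA b * w ^ b) +
        μ * ∑ b ∈ Finset.range (dimFT i - (i/2+1)), dB b * w ^ b := by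
    intro w μ
    have step1 : (∑ k, d k * bas i k ![1, w, μ]) =
        ∑ k ∈ Finset.range (dimFT i), (if hb : k < dimFT i then d ⟨k, hb⟩ else 0) *
          (if k < i/2+1 then w ^ k else w ^ (k - (i/2+1)) * μ) := by
      rw [← Fin.sum_univ_eq_sum_range
        (fun k => (if hb : k < dimFT i then d ⟨k, hb⟩ else 0) *
          (if k < i/2+1 then w ^ k else w ^ (k - (i/2+1)) * μ)) (dimFT i)]
      apply Finset.sum_congr rfl
      intro k _
      rw [bas_eval, dif_pos k.isLt]
    rw [step1]
    have split : ∀ f : ℕ → ℂ, ∑ k ∈ Finset.range (dimFT i), f k =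
        (∑ k ∈ Finset.range (i/2+1), f k) +
          ∑ b ∈ Finset.range (dimFT i - (i/2+1)), f (i/2+1 + b) := by
      intro f
      conv_lhs => rw [Finset.range_eq_Ico]
      rw [← Finset.sum_Ico_consecutive _ (Nat.zero_le (i/2+1)) hm1D]
      congr 1
      · rw [Finset.range_eq_Ico]
      · rw [Finset.sum_Ico_eq_sum_range]
    rw [split]
    congr 1
    · apply Finset.sum_congr rfl
      intro b hb
      have hb1 : b < i/2+1 := Finset.mem_range.mp hb
      rw [if_pos hb1, dif_pos (lt_of_lt_of_le hb1 hm1D)]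
      simp only [hdA]
      rw [dif_pos (lt_of_lt_of_le hb1 hm1D)]
    · rw [Finset.mul_sum]
      apply Finset.sum_congr rfl
      intro b hb
      have hbm : ¬ (i/2+1 + b < i/2+1) := by omega
      have hbD : i/2+1+b < dimFT i := by
        have := Finset.mem_range.mp hb
        omega
      rw [if_neg hbm]
      have he : i/2+1 + b - (i/2+1) = b := by omega
      rw [he, dif_pos hbD]
      simp only [hdB]
      rw [dif_pos hbD]
      ring
  have hAB : ∀ᶠ w in nhds (0:ℂ),
      (∑ b ∈ Finset.range (i/2+1), dA b * w ^ b) = 0 ∧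
      (∑ b ∈ Finset.range (dimFT i - (i/2+1)), dB b * w ^ b) = 0 := by
    have hc : ContinuousAt (fun w : ℂ => 1 + w ^ 3) 0 := by fun_prop
    have hne : ∀ᶠ w in nhds (0:ℂ), 1 + w ^ 3 ≠ 0 := by
      have := hc.eventually_ne (show (1:ℂ) + (0:ℂ) ^ 3 ≠ 0 by norm_num)
      simpa using this
    filter_upwards [hne] with w hw
    obtain ⟨μ, hμ⟩ := IsAlgClosed.exists_pow_nat_eq (k := ℂ) (-(1 + w ^ 3)) (n := 2)
      (by norm_num)
    have hμ0 : μ ≠ 0 := by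
      intro h0
      rw [h0] at hμ
      apply hw
      have : (0:ℂ) = -(1 + w^3) := by simpa using hμ
      linear_combination this
    have hc1 : onConeP ![1, w, μ] := by
      show (1:ℂ) ^ 6 + w ^ 3 + μ ^ 2 = 0
      linear_combination hμ
    have hc2 : onConeP ![1, w, -μ] := by
      show (1:ℂ) ^ 6 + w ^ 3 + (-μ) ^ 2 = 0
      linear_combination hμ
    have e1 := h _ hc1
    have e2 := h _ hc2
    rw [key w μ] at e1
    rw [key w (-μ)] at e2
    constructor
    · linear_combination (e1 + e2) / 2
    · have hμB : μ * (∑ b ∈ Finset.range (dimFT i - (i/2+1)), dB b * w ^ b) = 0 := by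
        linear_combination (e1 - e2) / 2
      rcases mul_eq_zero.mp hμB with hc' | hc'
      · exact absurd hc' hμ0
      · exact hc'
  have hA0 : ∀ b, b < i/2+1 → dA b = 0 := by
    intro b hb
    refine polyCoeffZero (i/2+1) (i/2+1) dA ?_ b hb hb
    have hev : (fun w : ℂ => ∑ b ∈ Finset.range (i/2+1), dA b * w ^ b)
        =ᶠ[nhdsWithin (0:ℂ) {(0:ℂ)}ᶜ] (fun _ => 0) :=
      eventually_nhdsWithin_of_eventually_nhds (hAB.mono fun w hw => hw.1)
    exact (isBigO_zero _ _).congr' hev.symm EventuallyEq.rfl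
  have hB0 : ∀ b, b < dimFT i - (i/2+1) → dB b = 0 := by
    intro b hb
    refine polyCoeffZero (dimFT i - (i/2+1)) (dimFT i - (i/2+1)) dB ?_ b hb hb
    have hev : (fun w : ℂ => ∑ b ∈ Finset.range (dimFT i - (i/2+1)), dB b * w ^ b)
        =ᶠ[nhdsWithin (0:ℂ) {(0:ℂ)}ᶜ] (fun _ => 0) :=
      eventually_nhdsWithin_of_eventually_nhds (hAB.mono fun w hw => hw.2)
    exact (isBigO_zero _ _).congr' hev.symm EventuallyEq.rfl
  intro k
  by_cases hk : (k : ℕ) < i/2+1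
  · have he : dA (k : ℕ) = d k := by
      rw [hdA]
      simp only [k.isLt, dif_pos, Fin.eta]
    rw [← he]
    exact hA0 _ hk
  · have hkD : i/2+1 + ((k:ℕ) - (i/2+1)) < dimFT i := by
      have := k.isLt
      omega
    have he : dB ((k:ℕ) - (i/2+1)) = d k := by
      simp only [hdB]
      rw [dif_pos hkD]
      congr 1
      apply Fin.ext
      show i/2+1 + ((k:ℕ) - (i/2+1)) = (k:ℕ)
      omega
    rw [← he]
    exact hB0 _ (by have := k.isLt; omega)

/-! ### the monomial arcs and basis membership -/

lemma bas_analyticAt (i k : ℕ) (x : Fin 3 → ℂ) : AnalyticAt ℂ (bas i k) x := by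
  apply AnalyticAt.mul
  apply AnalyticAt.mul
  · exact ((ContinuousLinearMap.proj (R := ℂ) (φ := fun _ : Fin 3 => ℂ) 0).analyticAt x).pow _
  · exact ((ContinuousLinearMap.proj (R := ℂ) (φ := fun _ : Fin 3 => ℂ) 1).analyticAt x).pow _
  · exact ((ContinuousLinearMap.proj (R := ℂ) (φ := fun _ : Fin 3 => ℂ) 2).analyticAt x).pow _

lemma arc_comp_an {x : (Fin 3 → ℂ) → ℂ} (hx : AnalyticAt ℂ x 0) (ψ : Arc') :
    AnalyticAt ℂ (x ∘ ψ.toFun) 0 :=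
  AnalyticAt.comp (by rw [ψ.map_zero]; exact hx) ψ.analyticAt

lemma bas_arc_isBigO (i : ℕ) {k : ℕ} (hk : k < dimFT i) (ψ : Arc') :
    (fun τ => bas i k (ψ.toFun τ)) =O[nhds (0:ℂ)] fun τ => τ ^ i := by
  have h0 := compPow (compBound ψ 0) (expA i k)
  have h1 := compPow (compBound ψ 1) (expB i k)
  have h2 := compPow (compBound ψ 2) (expC i k)
  have hmul := (h0.mul h1).mul h2
  have heq : ∀ τ : ℂ, τ ^ (((0:Fin 3):ℕ)+1) ^ 1 = τ := by intro τ; norm_num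
  have hw := expo_weight hk
  have hexp : (fun τ : ℂ => τ ^ ((((0:Fin 3):ℕ)+1) * expA i k) *
      τ ^ ((((1:Fin 3):ℕ)+1) * expB i k) * τ ^ ((((2:Fin 3):ℕ)+1) * expC i k))
      = fun τ : ℂ => τ ^ i := by
    funext τ
    rw [← pow_add, ← pow_add]
    congr 1
    show 1 * expA i k + 2 * expB i k + 3 * expC i k = i
    omega
  rw [hexp] at hmul
  exact hmul

lemma bas_mem (i : ℕ) {k : ℕ} (hk : k < dimFT i) : bas i k ∈ arcFiltration 3 fT i := by
  refine ⟨bas_analyticAt i k 0, ?_⟩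
  rw [vArc, le_iInf_iff]
  intro ψ
  have han := arc_comp_an (bas_analyticAt i k 0) ψ
  rw [ord_eq han]
  exact ordLB han (bas_arc_isBigO i hk ψ)

def coneFun (P : Fin 3 → ℂ) : ℂ → Fin 3 → ℂ := fun τ j => P j * τ ^ ((j:ℕ)+1)

def coneArc (P : Fin 3 → ℂ) (hP : onConeP P) : Arc' where
  toFun := coneFun P
  analyticAt := by
    apply AnalyticAt.pi
    intro j
    exact analyticAt_const.mul ((analyticAt_id).pow _)
  map_zero := by
    funext j
    simp [coneFun]
  vanish := by
    apply Filter.Eventually.of_forall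
    intro τ
    show (P 0 * τ ^ ((0:ℕ)+1)) ^ 6 + (P 1 * τ ^ ((1:ℕ)+1)) ^ 3
        + (P 2 * τ ^ ((2:ℕ)+1)) ^ 2 = 0
    have hc : P 0 ^ 6 + P 1 ^ 3 + P 2 ^ 2 = 0 := hP
    linear_combination (τ ^ 6) * hc

lemma coneArc_toFun (P : Fin 3 → ℂ) (hP : onConeP P) : (coneArc P hP).toFun = coneFun P := rfl

lemma bas_coneFun {i k : ℕ} (hk : k < dimFT i) (P : Fin 3 → ℂ) (τ : ℂ) :
    bas i k (coneFun P τ) = bas i k P * τ ^ i := by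
  have hw := expo_weight hk
  show (P 0 * τ ^ ((0:ℕ)+1)) ^ expA i k * (P 1 * τ ^ ((1:ℕ)+1)) ^ expB i k
      * (P 2 * τ ^ ((2:ℕ)+1)) ^ expC i k
    = P 0 ^ expA i k * P 1 ^ expB i k * P 2 ^ expC i k * τ ^ i
  calc (P 0 * τ ^ ((0:ℕ)+1)) ^ expA i k * (P 1 * τ ^ ((1:ℕ)+1)) ^ expB i k
      * (P 2 * τ ^ ((2:ℕ)+1)) ^ expC i k
      = (P 0 ^ expA i k * P 1 ^ expB i k * P 2 ^ expC i k) *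
        (τ ^ (1 * expA i k) * τ ^ (2 * expB i k) * τ ^ (3 * expC i k)) := by
        rw [mul_pow, mul_pow, mul_pow, ← pow_mul, ← pow_mul, ← pow_mul]
        ring
    _ = P 0 ^ expA i k * P 1 ^ expB i k * P 2 ^ expC i k * τ ^ i := by
        rw [← pow_add, ← pow_add]
        congr 2
        omega

/-! ### power series expansion into monomials -/

def bvT (j : Fin 3) : Fin 3 → ℂ := fun j' => if j = j' then 1 else 0

def mnS (e : Σ k : ℕ, Fin k → Fin 3) : (Fin 3 → ℂ) → ℂ := fun w => ∏ l, w (e.2 l)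

def wtS (e : Σ k : ℕ, Fin k → Fin 3) : ℕ := ∑ l, ((e.2 l : ℕ) + 1)

noncomputable def cfS (p : FormalMultilinearSeries ℂ (Fin 3 → ℂ) ℂ)
    (e : Σ k : ℕ, Fin k → Fin 3) : ℂ := p e.1 (fun l => bvT (e.2 l))

lemma partialSum_eq (p : FormalMultilinearSeries ℂ (Fin 3 → ℂ) ℂ) (n : ℕ) (w : Fin 3 → ℂ) :
    p.partialSum n w =
      ∑ e ∈ (Finset.range n).sigma (fun k => (Finset.univ : Finset (Fin k → Fin 3))),
        cfS p e * mnS e w := by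
  rw [FormalMultilinearSeries.partialSum, Finset.sum_sigma]
  apply Finset.sum_congr rfl
  intro k _
  have hw : (fun _ : Fin k => w) = fun _ : Fin k => ∑ j : Fin 3, w j • bvT j := by
    funext l
    exact pi_eq_sum_univ w
  rw [hw]
  have hms : (p k) (fun _ : Fin k => ∑ j : Fin 3, w j • bvT j) =
      ∑ r : Fin k → Fin 3, (p k) (fun l => w (r l) • bvT (r l)) :=
    (p k).toMultilinearMap.map_sum (g := fun (_ : Fin k) (j : Fin 3) => w j • bvT j)
  rw [hms]
  apply Finset.sum_congr rfl
  intro r _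
  have := (p k).toMultilinearMap.map_smul_univ (fun l => w (r l)) (fun l => bvT (r l))
  rw [show ((p k) fun l => w (r l) • bvT (r l)) = (∏ l, w (r l)) • (p k) (fun l => bvT (r l))
    from this]
  rw [smul_eq_mul]
  exact mul_comm _ _

lemma isBigO_finset_prod {ι : Type*} (s : Finset ι) (f : ι → ℂ → ℂ) (n : ι → ℕ)
    (h : ∀ l ∈ s, (f l) =O[nhds (0:ℂ)] fun τ => τ ^ (n l)) :
    (fun τ => ∏ l ∈ s, f l τ) =O[nhds (0:ℂ)] fun τ => τ ^ (∑ l ∈ s, n l) := by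
  induction s using Finset.cons_induction with
  | empty => simpa using isBigO_refl (fun _ : ℂ => (1:ℂ)) _
  | cons a s ha ih =>
    simp only [Finset.prod_cons, Finset.sum_cons, pow_add]
    exact (h a (Finset.mem_cons_self a s)).mul (ih fun l hl => h l (Finset.mem_cons_of_mem hl))

lemma mnS_arc_isBigO (ψ : Arc') (e : Σ k : ℕ, Fin k → Fin 3) :
    (fun τ => mnS e (ψ.toFun τ)) =O[nhds (0:ℂ)] fun τ => τ ^ (wtS e) :=
  isBigO_finset_prod Finset.univ (fun l τ => ψ.toFun τ (e.2 l)) (fun l => (e.2 l : ℕ)+1)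
    (fun l _ => compBound ψ (e.2 l))

lemma mnS_coneFun (e : Σ k : ℕ, Fin k → Fin 3) (P : Fin 3 → ℂ) (τ : ℂ) :
    mnS e (coneFun P τ) = mnS e P * τ ^ wtS e := by
  unfold mnS coneFun wtS
  rw [Finset.prod_mul_distrib, Finset.prod_pow_eq_pow_sum]

lemma rem_isBigO {g : (Fin 3 → ℂ) → ℂ} {p : FormalMultilinearSeries ℂ (Fin 3 → ℂ) ℂ}
    (hp : HasFPowerSeriesAt g p 0) (i : ℕ) (ψ : Arc') :
    (fun τ => g (ψ.toFun τ) - p.partialSum (i+1) (ψ.toFun τ)) =O[nhds (0:ℂ)]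
      fun τ => τ ^ (i+1) := by
  have h1 := hp.isBigO_sub_partialSum_pow (i+1)
  simp only [zero_add] at h1
  have htend : Filter.Tendsto ψ.toFun (nhds 0) (nhds 0) := by
    have := ψ.analyticAt.continuousAt
    rw [ContinuousAt, ψ.map_zero] at this
    exact this
  have h2 := h1.comp_tendsto htend
  refine h2.trans ?_
  have h3 : ψ.toFun =O[nhds (0:ℂ)] fun τ : ℂ => τ := by
    rw [isBigO_pi]
    intro j
    have := (compBound ψ j).trans (isBigO_pow_pow_of_le (show 1 ≤ (j:ℕ)+1 by omega))
    simpa using this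
  have h4 := (h3.norm_left.pow (i+1))
  exact h4

/-! ### existence of the representation -/

lemma exists_rep {i : ℕ} {g : (Fin 3 → ℂ) → ℂ} (hg : g ∈ arcFiltration 3 fT i) :
    ∃ c : Fin (dimFT i) → ℂ,
      (g - ∑ k : Fin (dimFT i), c k • bas i k) ∈ arcFiltration 3 fT (i+1) := by
  obtain ⟨hgan, hvi⟩ := hg
  have hv : ∀ ψ : Arc', (i:ℕ∞) ≤ ord (g ∘ ψ.toFun) := fun ψ => le_trans hvi (iInf_le _ ψ)
  obtain ⟨p, hp⟩ := id hgan
  set ID := (Finset.range (i+1)).sigma (fun k => (Finset.univ : Finset (Fin k → Fin 3)))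
    with hID
  have hwt : ∀ e ∈ ID, wtS e ≤ 3*i := by
    rintro ⟨k, r⟩ he
    have hk : k < i + 1 := Finset.mem_range.mp (Finset.mem_sigma.mp he).1
    unfold wtS
    calc (∑ l : Fin k, ((r l : ℕ)+1)) ≤ ∑ _l : Fin k, 3 :=
          Finset.sum_le_sum (fun l _ => by have := (r l).isLt; omega)
      _ = 3 * k := by
          rw [Finset.sum_const, Finset.card_univ, Fintype.card_fin, smul_eq_mul]
          ring
      _ ≤ 3 * i := by omega
  have hmaps : ∀ e ∈ ID, wtS e ∈ Finset.range (3*i+1) :=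
    fun e he => Finset.mem_range.mpr (by have := hwt e he; omega)
  have fact1 : ∀ j, j < i → ∀ P, onConeP P →
      (∑ e ∈ ID.filter (fun e => wtS e = j), cfS p e * mnS e P) = 0 := by
    intro j hj P hP
    set φ : Arc' := coneArc P hP with hφ
    have hφfun : φ.toFun = coneFun P := rfl
    have han := arc_comp_an hgan φ
    have hgφO : (g ∘ φ.toFun) =O[nhds (0:ℂ)] fun τ => τ ^ i := by
      apply ordGE han
      rw [← ord_eq han]
      exact hv φ
    have hrem := rem_isBigO hp i φ
    have hps : ∀ τ : ℂ, p.partialSum (i+1) (φ.toFun τ) =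
        ∑ j' ∈ Finset.range (3*i+1),
          (∑ e ∈ ID.filter (fun e => wtS e = j'), cfS p e * mnS e P) * τ ^ j' := by
      intro τ
      rw [hφfun, partialSum_eq, ← hID,
        ← Finset.sum_fiberwise_of_maps_to hmaps (fun e => cfS p e * mnS e (coneFun P τ))]
      apply Finset.sum_congr rfl
      intro j' _
      rw [Finset.sum_mul]
      apply Finset.sum_congr rfl
      intro e he
      rw [mnS_coneFun, (Finset.mem_filter.mp he).2]
      ring
    have hpoly : (fun τ : ℂ => ∑ j' ∈ Finset.range (3*i+1),
        (∑ e ∈ ID.filter (fun e => wtS e = j'), cfS p e * mnS e P) * τ ^ j')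
        =O[nhds (0:ℂ)] fun τ => τ ^ i := by
      have hsub := hgφO.sub (hrem.trans (isBigO_pow_pow_of_le (Nat.le_succ i)))
      refine hsub.congr' ?_ EventuallyEq.rfl
      apply Filter.Eventually.of_forall
      intro τ
      show g (φ.toFun τ) - (g (φ.toFun τ) - p.partialSum (i+1) (φ.toFun τ)) = _
      rw [sub_sub_cancel, hps τ]
    exact polyCoeffZero i (3*i+1)
      (fun j' => ∑ e ∈ ID.filter (fun e => wtS e = j'), cfS p e * mnS e P)
      (hpoly.mono nhdsWithin_le_nhds) j hj (by omega)
  have fact2 : ∃ c : Fin (dimFT i) → ℂ, ∀ P, onConeP P →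
      (∑ e ∈ ID.filter (fun e => wtS e = i), cfS p e * mnS e P) =
        ∑ k, c k * bas i k P := by
    have hspan : ∀ e ∈ ID.filter (fun e => wtS e = i), ∃ γ : Fin (dimFT i) → ℂ,
        ∀ P, onConeP P → mnS e P = ∑ k, γ k * bas i k P := by
      rintro ⟨k, r⟩ he
      have hwe : wtS ⟨k, r⟩ = i := (Finset.mem_filter.mp he).2
      have hmn : ∀ P : Fin 3 → ℂ, mnS ⟨k,r⟩ P =
          P 0 ^ (Finset.univ.filter (fun l : Fin k => r l = 0)).card *
          P 1 ^ (Finset.univ.filter (fun l : Fin k => r l = 1)).card *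
          P 2 ^ (Finset.univ.filter (fun l : Fin k => r l = 2)).card := by
        intro P
        unfold mnS
        rw [← Finset.prod_fiberwise_of_maps_to (g := r) (t := Finset.univ)
          (fun _ _ => Finset.mem_univ _) (fun l => P (r l))]
        rw [Fin.prod_univ_three]
        congr 1
        · congr 1
          · rw [Finset.prod_congr rfl (fun l hl => by
                rw [(Finset.mem_filter.mp hl).2]), Finset.prod_const]
          · rw [Finset.prod_congr rfl (fun l hl => by
                rw [(Finset.mem_filter.mp hl).2]), Finset.prod_const]
        · rw [Finset.prod_congr rfl (fun l hl => by
              rw [(Finset.mem_filter.mp hl).2]), Finset.prod_const]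
      have hwc : (Finset.univ.filter (fun l : Fin k => r l = 0)).card +
          2 * (Finset.univ.filter (fun l : Fin k => r l = 1)).card +
          3 * (Finset.univ.filter (fun l : Fin k => r l = 2)).card = i := by
        rw [← hwe]
        unfold wtS
        rw [← Finset.sum_fiberwise_of_maps_to (g := r) (t := Finset.univ)
          (fun _ _ => Finset.mem_univ _) (fun l => ((r l : ℕ) + 1))]
        rw [Fin.sum_univ_three]
        have h0 : ∀ j : Fin 3, (∑ l ∈ Finset.univ.filter (fun l : Fin k => r l = j),
            ((r l : ℕ) + 1)) = (Finset.univ.filter (fun l : Fin k => r l = j)).card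
              * ((j : ℕ) + 1) := by
          intro j
          rw [Finset.sum_congr rfl (fun l hl => by rw [(Finset.mem_filter.mp hl).2]),
            Finset.sum_const, smul_eq_mul]
        rw [h0 0, h0 1, h0 2]
        have e0 : ((0 : Fin 3) : ℕ) = 0 := rfl
        have e1 : ((1 : Fin 3) : ℕ) = 1 := rfl
        have e2 : ((2 : Fin 3) : ℕ) = 2 := rfl
        rw [e0, e1, e2]
        ring
      obtain ⟨γ, hγ⟩ := span_mono i _ _ _ hwc
      exact ⟨γ, fun P hP => by rw [hmn P]; exact hγ P hP⟩
    choose γf hγf using hspan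
    refine ⟨fun k => ∑ e ∈ (ID.filter (fun e => wtS e = i)).attach,
      cfS p e.1 * γf e.1 e.2 k, ?_⟩
    intro P hP
    rw [← Finset.sum_attach (ID.filter (fun e => wtS e = i))
      (fun e => cfS p e * mnS e P)]
    calc (∑ e ∈ (ID.filter (fun e => wtS e = i)).attach, cfS p e.1 * mnS e.1 P)
        = ∑ e ∈ (ID.filter (fun e => wtS e = i)).attach,
            cfS p e.1 * ∑ k, γf e.1 e.2 k * bas i k P := by
          apply Finset.sum_congr rfl
          intro e _
          rw [hγf e.1 e.2 P hP]
      _ = ∑ e ∈ (ID.filter (fun e => wtS e = i)).attach,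
            ∑ k, (cfS p e.1 * γf e.1 e.2 k) * bas i k P := by
          apply Finset.sum_congr rfl
          intro e _
          rw [Finset.mul_sum]
          apply Finset.sum_congr rfl
          intro k _
          ring
      _ = ∑ k, ∑ e ∈ (ID.filter (fun e => wtS e = i)).attach,
            (cfS p e.1 * γf e.1 e.2 k) * bas i k P := Finset.sum_comm
      _ = ∑ k, (∑ e ∈ (ID.filter (fun e => wtS e = i)).attach,
            cfS p e.1 * γf e.1 e.2 k) * bas i k P := by
          apply Finset.sum_congr rfl
          intro k _
          rw [Finset.sum_mul]
  obtain ⟨c, hc⟩ := fact2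
  have hsum_eq : (∑ k : Fin (dimFT i), c k • bas i k) =
      fun w => ∑ k : Fin (dimFT i), c k * bas i k w := by
    funext w
    simp [Finset.sum_apply, Pi.smul_apply, smul_eq_mul]
  have hsum_an : AnalyticAt ℂ (∑ k : Fin (dimFT i), c k • bas i k) 0 := by
    rw [hsum_eq]
    exact Finset.analyticAt_fun_sum Finset.univ
      (fun k _ => analyticAt_const.mul (bas_analyticAt i k 0))
  have hdan : AnalyticAt ℂ (g - ∑ k : Fin (dimFT i), c k • bas i k) 0 := hgan.sub hsum_an
  refine ⟨c, hdan, ?_⟩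
  rw [vArc, le_iInf_iff]
  intro ψ
  have hanψ := arc_comp_an hdan ψ
  rw [ord_eq hanψ]
  apply ordLB hanψ
  have hcone_ev : ∀ᶠ τ in nhds (0:ℂ), onConeP (ψ.toFun τ) := ψ.vanish
  have hhigh : (fun τ => ∑ j' ∈ (Finset.range (3*i+1)).filter (fun j' => i+1 ≤ j'),
      ∑ e ∈ ID.filter (fun e => wtS e = j'), cfS p e * mnS e (ψ.toFun τ))
      =O[nhds (0:ℂ)] fun τ => τ^(i+1) := by
    apply IsBigO.fun_sum
    intro j' hj'
    apply IsBigO.fun_sum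
    intro e he
    have hwe : wtS e = j' := (Finset.mem_filter.mp he).2
    have hij : i+1 ≤ j' := (Finset.mem_filter.mp hj').2
    have hO := mnS_arc_isBigO ψ e
    rw [hwe] at hO
    exact (hO.trans (isBigO_pow_pow_of_le hij)).const_mul_left _
  have hbig := (rem_isBigO hp i ψ).add hhigh
  refine hbig.congr' ?_ EventuallyEq.rfl
  filter_upwards [hcone_ev] with τ hτ
  set F : ℕ → ℂ := fun j' => ∑ e ∈ ID.filter (fun e => wtS e = j'),
    cfS p e * mnS e (ψ.toFun τ) with hF
  have hps : p.partialSum (i+1) (ψ.toFun τ) = ∑ j' ∈ Finset.range (3*i+1), F j' := by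
    rw [partialSum_eq, ← hID,
      ← Finset.sum_fiberwise_of_maps_to hmaps (fun e => cfS p e * mnS e (ψ.toFun τ))]
  have hsplit : (∑ j' ∈ Finset.range (3*i+1), F j')
      = (∑ j' ∈ Finset.range (i+1), F j') +
        ∑ j' ∈ (Finset.range (3*i+1)).filter (fun j' => i+1 ≤ j'), F j' := by
    rw [← Finset.sum_filter_add_sum_filter_not (Finset.range (3*i+1))
      (fun j' => j' < i+1) F]
    congr 1
    · apply Finset.sum_congr ?_ (fun _ _ => rfl)
      ext j'
      simp only [Finset.mem_filter, Finset.mem_range]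
      omega
    · apply Finset.sum_congr ?_ (fun _ _ => rfl)
      ext j'
      simp only [Finset.mem_filter, Finset.mem_range]
      omega
  have hlow : ∑ j' ∈ Finset.range i, F j' = 0 :=
    Finset.sum_eq_zero (fun j' hj' => fact1 j' (Finset.mem_range.mp hj') _ hτ)
  have hFi : F i = ∑ k, c k * bas i k (ψ.toFun τ) := hc _ hτ
  show g (ψ.toFun τ) - p.partialSum (i+1) (ψ.toFun τ) +
      (∑ j' ∈ (Finset.range (3*i+1)).filter (fun j' => i+1 ≤ j'), F j')
      = ((g - ∑ k, c k • bas i k) ∘ ψ.toFun) τ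
  have heval : ((g - ∑ k : Fin (dimFT i), c k • bas i k) ∘ ψ.toFun) τ
      = g (ψ.toFun τ) - ∑ k, c k * bas i k (ψ.toFun τ) := by
    simp [Function.comp, hsum_eq]
  rw [heval, hps, hsplit, Finset.sum_range_succ, hlow, hFi]
  ring

/-! ### uniqueness -/

lemma uniq_rep {i : ℕ} {g : (Fin 3 → ℂ) → ℂ} (c c' : Fin (dimFT i) → ℂ)
    (h1 : (g - ∑ k : Fin (dimFT i), c k • bas i k) ∈ arcFiltration 3 fT (i+1))
    (h2 : (g - ∑ k : Fin (dimFT i), c' k • bas i k) ∈ arcFiltration 3 fT (i+1)) :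
    c = c' := by
  obtain ⟨han1, hv1⟩ := h1
  obtain ⟨han2, hv2⟩ := h2
  have hdiff : ∀ P, onConeP P → ∑ k, (c' k - c k) * bas i k P = 0 := by
    intro P hP
    set φ : Arc' := coneArc P hP with hφ
    have hφfun : φ.toFun = coneFun P := rfl
    have O1 : ((g - ∑ k : Fin (dimFT i), c k • bas i k) ∘ φ.toFun)
        =O[nhds (0:ℂ)] fun τ => τ^(i+1) := by
      have han := arc_comp_an han1 φ
      apply ordGE han
      rw [← ord_eq han]
      exact le_trans hv1 (iInf_le _ φ)
    have O2 : ((g - ∑ k : Fin (dimFT i), c' k • bas i k) ∘ φ.toFun)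
        =O[nhds (0:ℂ)] fun τ => τ^(i+1) := by
      have han := arc_comp_an han2 φ
      apply ordGE han
      rw [← ord_eq han]
      exact le_trans hv2 (iInf_le _ φ)
    have hsub := O1.sub O2
    have hb : ∀ (τ : ℂ) (k : Fin (dimFT i)),
        bas i k (coneFun P τ) = bas i k P * τ^i := fun τ k => bas_coneFun k.isLt P τ
    have hpt : ∀ τ : ℂ,
        ((g - ∑ k : Fin (dimFT i), c k • bas i k) ∘ φ.toFun) τ -
          ((g - ∑ k : Fin (dimFT i), c' k • bas i k) ∘ φ.toFun) τ
        = (∑ k, (c' k - c k) * bas i k P) * τ^i := by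
      intro τ
      have hcancel : ∀ x y z : ℂ, x - y - (x - z) = z - y := by intros; ring
      simp only [Function.comp_apply, Pi.sub_apply, Finset.sum_apply, Pi.smul_apply,
        smul_eq_mul, hφfun, hb τ]
      rw [hcancel, Finset.sum_mul, ← Finset.sum_sub_distrib]
      apply Finset.sum_congr rfl
      intro k _
      ring
    have hK : (fun τ : ℂ => (∑ k, (c' k - c k) * bas i k P) * τ^i)
        =O[nhdsWithin (0:ℂ) {(0:ℂ)}ᶜ] fun τ => τ^(i+1) :=
      (hsub.congr' (Filter.Eventually.of_forall hpt) EventuallyEq.rfl).mono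
        nhdsWithin_le_nhds
    exact const_detect hK
  have hz := indep i (fun k => c' k - c k) hdiff
  funext k
  have h := hz k
  have := sub_eq_zero.mp h
  exact this.symm

lemma main_dimQuot (i : ℕ) : dimQuotEq (arcFiltration 3 fT) i (dimFT i) := by
  refine ⟨fun k => bas i k, fun k => bas_mem i k.isLt, ?_⟩
  intro g hg
  obtain ⟨c, hcmem⟩ := exists_rep hg
  exact ⟨c, hcmem, fun c' hc' => uniq_rep c' c hc' hcmem⟩

/-! ### the Poincaré series identity -/

lemma dimFT_eq (n : ℕ) : dimFT n = if n = 0 then 1 else n := by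
  unfold dimFT
  rcases eq_or_ne n 0 with rfl | h
  · norm_num
  · rw [if_neg h]
    split <;> omega

set_option maxHeartbeats 1000000 in
lemma series_id : (PowerSeries.mk fun i => (dimFT i : ℤ)) *
    ((1 - PowerSeries.X) * (1 - PowerSeries.X ^ 2) * (1 - PowerSeries.X ^ 3))
    = 1 - PowerSeries.X ^ 6 := by
  have hA : ((1 - PowerSeries.X) * (1 - PowerSeries.X^2) * (1 - PowerSeries.X^3)
      : PowerSeries ℤ)
      = 1 - PowerSeries.X^1 - PowerSeries.X^2 + PowerSeries.X^4 + PowerSeries.X^5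
        - PowerSeries.X^6 := by ring
  rw [hA]
  ext n
  rw [mul_sub, mul_add, mul_add, mul_sub, mul_sub, mul_one]
  simp only [map_sub, map_add, PowerSeries.coeff_one, PowerSeries.coeff_mul_X_pow',
    PowerSeries.coeff_mk, PowerSeries.coeff_X_pow, dimFT_eq]
  push_cast
  split_ifs <;> omega

/-- For the parabolic surface singularity `T_{2,3,6}` (= `J₁₀`),
i.e. `(V,0) ⊆ (ℂ³,0)` defined by `x⁶ + y³ + z² = 0`, the Poincaré series of the arc
filtration is `P_{V,0}(t) = (1 - t⁶)/((1 - t)(1 - t²)(1 - t³))`. -/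
theorem poincare_series_T236 :
    ∃ dimF : ℕ → ℕ,
      (∀ i, dimQuotEq
        (arcFiltration 3 (fun w : Fin 3 → ℂ => w 0 ^ 6 + w 1 ^ 3 + w 2 ^ 2)) i
        (dimF i)) ∧
      (PowerSeries.mk fun i => (dimF i : ℤ)) *
          ((1 - PowerSeries.X) * (1 - PowerSeries.X ^ 2) * (1 - PowerSeries.X ^ 3))
        = 1 - PowerSeries.X ^ 6 := by
  refine ⟨dimFT, fun i => ?_, series_id⟩
  exact main_dimQuot i
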